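/- With the same setup as the Held–Karp recurrence, if for each object i the completion map t ↦ t + c i t is monotone nondecreasing, then for every set U and every permutation s of U, T(U) ≤ time(s); i.e., the dynamic programming value is a lower bound on every sequence's total time, achieved by some permutation. -/

import Mathlib

open scoped NNReal

/-- Total completion time of a picking sequence: time(nil) = 0 and
time(s ++ [i]) = time(s) + c i (time(s)). -/
def seqTime {n : ℕ} (c : Fin n → ℝ≥0 → ℝ≥0) (s : List (Fin n)) : ℝ≥0 :=
  s.foldl (fun t i => t + c i t) 0

lemma seqTime_concat {n : ℕ} (c : Fin n → ℝ≥0 → ℝ≥0) (s : List (Fin n)) (i : Fin n) :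
    seqTime c (s ++ [i]) = seqTime c s + c i (seqTime c s) := by
  simp [seqTime, List.foldl_append]

/-- under the monotone completion-time assumption, the Held–Karp value
`T U` is a lower bound on the total time of every permutation of `U`, and is
achieved by some permutation of `U`. -/
theorem heldKarp_lower_bound {n : ℕ} (c : Fin n → ℝ≥0 → ℝ≥0)
    (hmono : ∀ i, Monotone fun t => t + c i t)
    (T : Finset (Fin n) → ℝ≥0)
    (hT0 : T ∅ = 0)
    (hTrec : ∀ (U : Finset (Fin n)) (hU : U.Nonempty),
      T U = U.inf' hU fun i => T (U.erase i) + c i (T (U.erase i))) :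
    ∀ U : Finset (Fin n),
      (∀ s : List (Fin n), s.Nodup → s.toFinset = U → T U ≤ seqTime c s) ∧
      (∃ s : List (Fin n), s.Nodup ∧ s.toFinset = U ∧ seqTime c s = T U) := by
  intro U
  induction U using Finset.strongInduction with
  | _ U ih =>
    rcases U.eq_empty_or_nonempty with rfl | hU
    · refine ⟨?_, ⟨[], by simp, by simp, by simp [seqTime, hT0]⟩⟩
      intro s hnd hts
      rcases List.toFinset_eq_empty_iff s |>.mp hts with rfl
      simp [seqTime, hT0]
    · constructor
      · intro s hnd hts
        rcases s.eq_nil_or_concat with rfl | ⟨s', i, rfl⟩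
        · simp at hts; exact absurd hts.symm hU.ne_empty
        rw [List.concat_eq_append] at hnd hts ⊢
        have hnd' : s'.Nodup := (List.nodup_append.mp hnd).1
        have hnotmem : i ∉ s' := by
          simp [List.nodup_append] at hnd
          exact fun h => hnd.2 i h rfl
        have hiU : i ∈ U := by
          rw [← hts]; simp
        have hts' : s'.toFinset = U.erase i := by
          rw [← hts]
          ext x
          simp [List.mem_toFinset, Finset.mem_erase]
          exact fun hx h => hnotmem (h ▸ hx)
        have hle : T U ≤ T (U.erase i) + c i (T (U.erase i)) := by
          rw [hTrec U hU]
          exact Finset.inf'_le _ hiU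
        have hle2 : T (U.erase i) ≤ seqTime c s' :=
          (ih _ (Finset.erase_ssubset hiU)).1 s' hnd' hts'
        calc T U ≤ T (U.erase i) + c i (T (U.erase i)) := hle
          _ ≤ seqTime c s' + c i (seqTime c s') := hmono i hle2
          _ = seqTime c (s' ++ [i]) := (seqTime_concat c s' i).symm
      · obtain ⟨i, hiU, hi⟩ := Finset.exists_mem_eq_inf' hU
          (fun i => T (U.erase i) + c i (T (U.erase i)))
        obtain ⟨s', hnd', hts', hval'⟩ := (ih _ (Finset.erase_ssubset hiU)).2
        refine ⟨s' ++ [i], ?_, ?_, ?_⟩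
        · rw [List.nodup_append']
          refine ⟨hnd', by simp, ?_⟩
          intro a ha hb
          simp at hb; rw [hb] at ha
          have : i ∈ U.erase i := hts' ▸ List.mem_toFinset.mpr ha
          simp at this
        · rw [List.toFinset_append, hts']
          simp only [List.toFinset_cons, List.toFinset_nil, LawfulSingleton.insert_empty_eq]
          rw [Finset.union_comm, ← Finset.insert_eq, Finset.insert_erase hiU]
        · rw [seqTime_concat, hval', hTrec U hU, hi]
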